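/- Every regular system of paths is upper convex or lower convex. -/

import Mathlib

noncomputable section

/-- A function `g` changes sign at `t`. -/
def SignChangeAt (g : ℝ → ℝ) (t : ℝ) : Prop :=
  ∃ ε > (0 : ℝ),
    ((∀ s ∈ Set.Ioo (t - ε) t, g s < 0) ∧ (∀ s ∈ Set.Ioo t (t + ε), 0 < g s)) ∨
    ((∀ s ∈ Set.Ioo (t - ε) t, 0 < g s) ∧ (∀ s ∈ Set.Ioo t (t + ε), g s < 0))

/-- A system of at least three paths (graphs of continuous functions on `[0,1]`):
distinct endpoints, finite pairwise intersections, all of which are crossings,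
and no triple intersection points. -/
structure PathSystem (m : ℕ) where
  f : Fin m → ℝ → ℝ
  size_ge : 3 ≤ m
  cont : ∀ i, ContinuousOn (f i) (Set.Icc 0 1)
  endpoints0 : ∀ i j : Fin m, i ≠ j → f i 0 ≠ f j 0
  endpoints1 : ∀ i j : Fin m, i ≠ j → f i 1 ≠ f j 1
  finite_meet : ∀ i j : Fin m, i ≠ j → {t : ℝ | t ∈ Set.Icc (0:ℝ) 1 ∧ f i t = f j t}.Finite
  crossing : ∀ i j : Fin m, i ≠ j → ∀ t ∈ Set.Icc (0:ℝ) 1, f i t = f j t →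
      SignChangeAt (fun s => f i s - f j s) t
  no_triple : ∀ i j k : Fin m, i ≠ j → i ≠ k → j ≠ k → ∀ t ∈ Set.Icc (0:ℝ) 1,
      ¬(f i t = f j t ∧ f i t = f k t)

/-- The set of parameters where paths `i` and `j` of the system meet (= cross). -/
def meetSet {m : ℕ} (S : PathSystem m) (i j : Fin m) : Set ℝ :=
  {t : ℝ | t ∈ Set.Icc (0:ℝ) 1 ∧ S.f i t = S.f j t}

/-- Each pair of paths crosses at least once and at most `k` times. -/
def KCrossing {m : ℕ} (S : PathSystem m) (k : ℕ) : Prop :=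
  ∀ i j : Fin m, i ≠ j → 1 ≤ (meetSet S i j).ncard ∧ (meetSet S i j).ncard ≤ k

/-- Path `i` appears on the upper envelope of the system. -/
def OnUpperEnv {m : ℕ} (S : PathSystem m) (i : Fin m) : Prop :=
  ∃ t ∈ Set.Icc (0:ℝ) 1, ∀ j : Fin m, j ≠ i → S.f j t < S.f i t

/-- Path `i` appears on the lower envelope of the system. -/
def OnLowerEnv {m : ℕ} (S : PathSystem m) (i : Fin m) : Prop :=
  ∃ t ∈ Set.Icc (0:ℝ) 1, ∀ j : Fin m, j ≠ i → S.f i t < S.f j t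

/-- The subsystem of `S` on the index set `s` is upper convex. -/
def UpperConvexOn {m : ℕ} (S : PathSystem m) (s : Finset (Fin m)) : Prop :=
  ∀ i ∈ s, ∃ t ∈ Set.Icc (0:ℝ) 1, ∀ j ∈ s, j ≠ i → S.f j t < S.f i t

/-- The subsystem of `S` on the index set `s` is lower convex. -/
def LowerConvexOn {m : ℕ} (S : PathSystem m) (s : Finset (Fin m)) : Prop :=
  ∀ i ∈ s, ∃ t ∈ Set.Icc (0:ℝ) 1, ∀ j ∈ s, j ≠ i → S.f i t < S.f j t

/-- The three-letter ordered alphabet `x ≺ y ≺ z` used for signatures. -/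
inductive XYZ : Type
  | x | y | z
deriving DecidableEq

/-- The signature of the size-3 subsystem on paths `i, j, k`, where the labels are
ordered by the values at `0` (bottom to top): the word on `{x,y,z}` listing the
crossings from left to right, `x` for an `{i,j}`-crossing, `y` for an `{i,k}`-crossing
and `z` for a `{j,k}`-crossing. -/
noncomputable def signature3 {m : ℕ} (S : PathSystem m) (i j k : Fin m)
    (h1 : S.f i 0 < S.f j 0) (h2 : S.f j 0 < S.f k 0) : List XYZ :=
  (Finset.sort
      (((S.finite_meet i j (by intro h; subst h; exact lt_irrefl _ h1)).toFinset ∪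
        (S.finite_meet i k (by intro h; subst h; exact lt_irrefl _ (h1.trans h2))).toFinset) ∪
        (S.finite_meet j k (by intro h; subst h; exact lt_irrefl _ h2)).toFinset) (· ≤ ·)).map
    (fun t => if S.f i t = S.f j t then XYZ.x else if S.f i t = S.f k t then XYZ.y else XYZ.z)

/-- `σ` is the common (nonempty) signature of all size-3 subsystems of `S`. -/
def RegularSig {m : ℕ} (S : PathSystem m) (σ : List XYZ) : Prop :=
  σ ≠ [] ∧ ∀ (i j k : Fin m) (h1 : S.f i 0 < S.f j 0) (h2 : S.f j 0 < S.f k 0),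
    signature3 S i j k h1 h2 = σ

/-- A regular system: size at least 4, and all size-3 subsystems have the same
nonempty signature. -/
def IsRegularSystem {m : ℕ} (S : PathSystem m) : Prop :=
  4 ≤ m ∧ ∃ σ : List XYZ, RegularSig S σ

/-- A system labeled by `[m]`: indices increase with the order of the left endpoints. -/
structure LabeledPathSystem (m : ℕ) extends PathSystem m where
  mono0 : ∀ i j : Fin m, i < j → f i 0 < f j 0

/-- Signature of the size-3 subsystem on `i < j < k` of a labeled system. -/
noncomputable def lsig {m : ℕ} (S : LabeledPathSystem m) (i j k : Fin m)
    (h1 : i < j) (h2 : j < k) : List XYZ :=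
  signature3 S.toPathSystem i j k (S.mono0 i j h1) (S.mono0 j k h2)

/-- `σ` is the common nonempty signature of all size-3 subsystems of the labeled
system `S`. -/
def SystemSignatureL {m : ℕ} (S : LabeledPathSystem m) (σ : List XYZ) : Prop :=
  σ ≠ [] ∧ ∀ (i j k : Fin m) (h1 : i < j) (h2 : j < k), lsig S i j k h1 h2 = σ

/-- The signature of a labeled system of three paths. -/
noncomputable def sig3 (S : LabeledPathSystem 3) : List XYZ :=
  lsig S 0 1 2 (by decide) (by decide)

/-- The set of parameters where path `i` meets some other path. -/
def crossTimes {m : ℕ} (S : PathSystem m) (i : Fin m) : Set ℝ :=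
  {t : ℝ | t ∈ Set.Icc (0:ℝ) 1 ∧ ∃ j : Fin m, j ≠ i ∧ S.f j t = S.f i t}

lemma crossTimes_finite {m : ℕ} (S : PathSystem m) (i : Fin m) :
    (crossTimes S i).Finite := by
  have hsub : crossTimes S i ⊆
      ⋃ j : Fin m, {t : ℝ | (t ∈ Set.Icc (0:ℝ) 1 ∧ S.f j t = S.f i t) ∧ j ≠ i} := by
    rintro t ⟨ht, j, hj, he⟩
    exact Set.mem_iUnion.2 ⟨j, ⟨ht, he⟩, hj⟩
  refine Set.Finite.subset (Set.finite_iUnion fun j => ?_) hsub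
  by_cases hj : j = i
  · subst hj
    have h0 : {t : ℝ | (t ∈ Set.Icc (0:ℝ) 1 ∧ S.f j t = S.f j t) ∧ j ≠ j} = ∅ := by
      ext t; simp
    rw [h0]; exact Set.finite_empty
  · exact (S.finite_meet j i hj).subset fun t ht => ht.1

/-- The local sequence of path `i`: the labels of the other paths in the order in
which path `i` meets them from left to right. -/
noncomputable def localSeq {m : ℕ} (S : PathSystem m) (i : Fin m) : List (Fin m) :=
  (Finset.sort (crossTimes_finite S i).toFinset (· ≤ ·)).map fun t =>
    if h : ∃ j : Fin m, j ≠ i ∧ S.f j t = S.f i t then h.choose else i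

/-- The tableau associated to a labeled system: row `r` (for `1 ≤ r ≤ m`) is the
local sequence of path `r` written with the (1-based) labels. -/
noncomputable def assocTab {m : ℕ} (S : LabeledPathSystem m) : ℕ → List ℕ :=
  fun r => if h : 1 ≤ r ∧ r ≤ m then
      (localSeq S.toPathSystem ⟨r - 1, by omega⟩).map (fun j => (j : ℕ) + 1)
    else []

/-- A nonempty word on `{x,y,z}` is irreducible if no nonempty proper prefix contains
equally many `x`'s, `y`'s and `z`'s. -/
def IrreducibleXYZ (σ : List XYZ) : Prop :=
  σ ≠ [] ∧ ∀ p : ℕ, 0 < p → p < σ.length →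
    ¬((σ.take p).count XYZ.x = (σ.take p).count XYZ.y ∧
      (σ.take p).count XYZ.y = (σ.take p).count XYZ.z)


namespace RSAux

open Finset

variable {m : ℕ} (S : PathSystem m)

/-- The meet finset of a pair of paths. -/
def MF (i j : Fin m) (h : i ≠ j) : Finset ℝ := (S.finite_meet i j h).toFinset

lemma mem_MF {i j : Fin m} {h : i ≠ j} {t : ℝ} :
    t ∈ MF S i j h ↔ (t ∈ Set.Icc (0:ℝ) 1 ∧ S.f i t = S.f j t) := by
  simp [MF, Set.Finite.mem_toFinset]

lemma MF_comm {i j : Fin m} (h : i ≠ j) : MF S i j h = MF S j i h.symm := by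
  ext t; simp only [mem_MF]; constructor <;> rintro ⟨h1, h2⟩ <;> exact ⟨h1, h2.symm⟩

lemma MF_subset_Ioo {i j : Fin m} {h : i ≠ j} {t : ℝ} (ht : t ∈ MF S i j h) :
    t ∈ Set.Ioo (0:ℝ) 1 := by
  rw [mem_MF] at ht
  obtain ⟨⟨h0, h1⟩, heq⟩ := ht
  constructor
  · rcases lt_or_eq_of_le h0 with h' | h'
    · exact h'
    · exact absurd (h' ▸ heq) (S.endpoints0 i j h)
  · rcases lt_or_eq_of_le h1 with h' | h'
    · exact h'
    · exact absurd (h' ▸ heq) (S.endpoints1 i j h)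

/-- The fundamental parity lemma: below `t` the relative order of two paths is
determined by the parity of the number of crossings before `t`. -/
lemma parity_iff (i j : Fin m) (hij : i ≠ j) (h0 : S.f i 0 < S.f j 0) :
    ∀ t ∈ Set.Icc (0:ℝ) 1, t ∉ MF S i j hij →
      (S.f i t < S.f j t ↔ Even (((MF S i j hij).filter (· < t)).card)) := by
  have hcont : ContinuousOn (fun s => S.f i s - S.f j s) (Set.Icc 0 1) :=
    (S.cont i).sub (S.cont j)
  suffices H : ∀ k : ℕ, ∀ t ∈ Set.Icc (0:ℝ) 1, t ∉ MF S i j hij →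
      ((MF S i j hij).filter (· < t)).card = k →
      (S.f i t < S.f j t ↔ Even k) by
    intro t ht hnm
    exact H _ t ht hnm rfl
  intro k
  induction k using Nat.strong_induction_on with
  | _ k IH =>
    intro t ht hnm hk
    by_cases hne : ((MF S i j hij).filter (· < t)).Nonempty
    · -- there is a crossing before `t`
      set M := MF S i j hij with hM
      set t' := (M.filter (· < t)).max' hne with ht'def
      have ht'F : t' ∈ M.filter (· < t) := Finset.max'_mem _ hne
      have ht'M : t' ∈ M := (Finset.mem_filter.mp ht'F).1
      have ht't : t' < t := by
        have := (Finset.mem_filter.mp ht'F).2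
        simpa using this
      have ht'Icc : t' ∈ Set.Icc (0:ℝ) 1 := (mem_MF S |>.mp ht'M).1
      have ht'Ioo : t' ∈ Set.Ioo (0:ℝ) 1 := MF_subset_Ioo S ht'M
      have heq : S.f i t' = S.f j t' := (mem_MF S |>.mp ht'M).2
      obtain ⟨ε, hε, hcase⟩ := S.crossing i j hij t' ht'Icc heq
      set L := M.filter (· < t') with hL
      have hLF : M.filter (· < t) = insert t' L := by
        ext u
        simp only [Finset.mem_filter, Finset.mem_insert, hL]
        constructor
        · rintro ⟨hu, hut⟩
          by_cases h' : u = t'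
          · exact Or.inl h'
          · refine Or.inr ⟨hu, ?_⟩
            have : u ≤ t' := Finset.le_max' _ u (Finset.mem_filter.mpr ⟨hu, by simpa using hut⟩)
            exact lt_of_le_of_ne this h'
        · rintro (h' | ⟨hu, hut⟩)
          · subst h'; exact ⟨ht'M, ht't⟩
          · exact ⟨hu, hut.trans ht't⟩
      have ht'L : t' ∉ L := by simp [hL]
      have hkL : k = L.card + 1 := by
        rw [← hk, hLF, Finset.card_insert_of_notMem ht'L]
      -- choose a point s just before t'
      set D : Finset ℝ := insert (0:ℝ) (insert (t' - ε) L) with hD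
      have hDne : D.Nonempty := ⟨0, by simp [hD]⟩
      set lb := D.max' hDne with hlbdef
      have hlblt : lb < t' := by
        rw [Finset.max'_lt_iff]
        intro b hb
        simp only [hD, Finset.mem_insert] at hb
        rcases hb with h' | h' | h'
        · exact h' ▸ ht'Ioo.1
        · subst h'; linarith
        · exact (Finset.mem_filter.mp h').2
      have hlb0 : (0:ℝ) ≤ lb := Finset.le_max' _ 0 (by simp [hD])
      have hlbe : t' - ε ≤ lb := Finset.le_max' _ _ (by simp [hD])
      have hlbL : ∀ u ∈ L, u ≤ lb := fun u hu => Finset.le_max' _ u (by simp [hD, hu])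
      set s := (lb + t')/2 with hsdef
      have hs1 : lb < s := by simp only [hsdef]; linarith
      have hs2 : s < t' := by simp only [hsdef]; linarith
      have hsIcc : s ∈ Set.Icc (0:ℝ) 1 := ⟨by linarith, by linarith [ht'Icc.2]⟩
      have hsM : s ∉ M := by
        intro hs
        have : s ∈ L := Finset.mem_filter.mpr ⟨hs, hs2⟩
        linarith [hlbL s this]
      have hfs : M.filter (· < s) = L := by
        ext u
        simp only [Finset.mem_filter, hL]
        constructor
        · rintro ⟨hu, hus⟩; exact ⟨hu, hus.trans hs2⟩
        · rintro ⟨hu, hut'⟩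
          exact ⟨hu, lt_of_le_of_lt (hlbL u (Finset.mem_filter.mpr ⟨hu, hut'⟩)) hs1⟩
      have ihs : S.f i s < S.f j s ↔ Even L.card := by
        refine IH L.card (by omega) s hsIcc hsM (by rw [hfs])
      have hsIoo : s ∈ Set.Ioo (t' - ε) t' := ⟨by linarith, hs2⟩
      -- choose a point u just after t'
      have hmin : t' < min (t' + ε) t := lt_min (by linarith) ht't
      set u := (t' + min (t' + ε) t)/2 with hudef
      have hu1 : t' < u := by simp only [hudef]; linarith
      have hu2 : u < min (t' + ε) t := by simp only [hudef]; linarith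
      have hu2' : u < t' + ε := lt_of_lt_of_le hu2 (min_le_left _ _)
      have hu3 : u < t := lt_of_lt_of_le hu2 (min_le_right _ _)
      have huIcc : u ∈ Set.Icc (0:ℝ) 1 := ⟨by linarith [ht'Ioo.1], by linarith [ht.2]⟩
      have hnoM : ∀ v ∈ M, t' < v → ¬ v < t := by
        intro v hv hv' hvt
        have : v ∈ M.filter (· < t) := Finset.mem_filter.mpr ⟨hv, hvt⟩
        have := Finset.le_max' _ v this
        rw [← ht'def] at this
        linarith
      have htne : S.f i t ≠ S.f j t := by
        intro h'
        exact hnm (mem_MF S |>.mpr ⟨ht, h'⟩)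
      have key : ∀ w : ℝ, u ≤ w → w ≤ t → w ∈ Set.Icc (0:ℝ) 1 →
          (S.f i w - S.f j w = 0) → False := by
        intro w hw1 hw2 hwIcc hweq
        have hwM : w ∈ M := mem_MF S |>.mpr ⟨hwIcc, by linarith [hweq]⟩
        have hwt' : t' < w := lt_of_lt_of_le hu1 hw1
        have hwt : w < t := by
          rcases lt_or_eq_of_le hw2 with h' | h'
          · exact h'
          · subst h'
            exact absurd (by linarith [hweq] : S.f i w = S.f j w) htne
        exact hnoM w hwM hwt' hwt
      have hsubut : Set.Icc u t ⊆ Set.Icc (0:ℝ) 1 :=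
        Set.Icc_subset_Icc (by linarith [huIcc.1]) ht.2
      have hcont' : ContinuousOn (fun s => S.f i s - S.f j s) (Set.Icc u t) :=
        hcont.mono hsubut
      rcases hcase with ⟨hnegl, hposr⟩ | ⟨hposl, hnegr⟩
      · -- sign goes - to +
        have hgs : S.f i s < S.f j s := by
          have h5 : S.f i s - S.f j s < 0 := hnegl s hsIoo
          linarith
        have hEvenL : Even L.card := ihs.mp hgs
        have hgu : 0 < S.f i u - S.f j u := hposr u ⟨hu1, hu2'⟩
        have hgt : 0 < S.f i t - S.f j t := by
          by_contra h'
          push_neg at h'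
          have h'' : S.f i t - S.f j t < 0 := by
            rcases lt_or_eq_of_le h' with h'' | h''
            · exact h''
            · exact absurd (by linarith : S.f i t = S.f j t) htne
          have h0mem : (0:ℝ) ∈ Set.Icc (S.f i t - S.f j t) (S.f i u - S.f j u) :=
            ⟨by linarith, by linarith⟩
          obtain ⟨w, hw, hweq⟩ := intermediate_value_Icc' (le_of_lt hu3) hcont' h0mem
          exact key w hw.1 hw.2 (hsubut hw) hweq
        rw [hkL, Nat.even_add_one]
        exact iff_of_false (by linarith) (not_not_intro hEvenL)
      · -- sign goes + to -
        have hgs : S.f j s < S.f i s := by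
          have h5 : 0 < S.f i s - S.f j s := hposl s hsIoo
          linarith
        have hOddL : ¬ Even L.card := by
          intro h'
          have := ihs.mpr h'
          linarith
        have hgu : S.f i u - S.f j u < 0 := hnegr u ⟨hu1, hu2'⟩
        have hgt : S.f i t - S.f j t < 0 := by
          by_contra h'
          push_neg at h'
          have h'' : 0 < S.f i t - S.f j t := by
            rcases lt_or_eq_of_le h' with h'' | h''
            · exact h''
            · exact absurd (by linarith : S.f i t = S.f j t) htne
          have h0mem : (0:ℝ) ∈ Set.Icc (S.f i u - S.f j u) (S.f i t - S.f j t) :=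
            ⟨by linarith, by linarith⟩
          obtain ⟨w, hw, hweq⟩ := intermediate_value_Icc (le_of_lt hu3) hcont' h0mem
          exact key w hw.1 hw.2 (hsubut hw) hweq
        rw [hkL, Nat.even_add_one]
        exact iff_of_true (by linarith) hOddL
    · -- no crossing before t
      have hF : (MF S i j hij).filter (· < t) = ∅ := Finset.not_nonempty_iff_eq_empty.mp hne
      have hk0 : k = 0 := by rw [← hk, hF]; rfl
      subst hk0
      simp only [Even.zero, iff_true]
      by_contra h'
      push_neg at h'
      have htne : S.f i t ≠ S.f j t := by
        intro h''
        exact hnm (mem_MF S |>.mpr ⟨ht, h''⟩)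
      have hgt : 0 < S.f i t - S.f j t := by
        rcases lt_or_eq_of_le h' with h'' | h''
        · linarith
        · exact absurd h''.symm htne
      have hsub : Set.Icc (0:ℝ) t ⊆ Set.Icc (0:ℝ) 1 := Set.Icc_subset_Icc le_rfl ht.2
      have hcont' : ContinuousOn (fun s => S.f i s - S.f j s) (Set.Icc 0 t) := hcont.mono hsub
      have h0mem : (0:ℝ) ∈ Set.Icc (S.f i 0 - S.f j 0) (S.f i t - S.f j t) :=
        ⟨by linarith, by linarith⟩
      obtain ⟨w, hw, hweq⟩ := intermediate_value_Icc ht.1 hcont' h0mem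
      have hweq' : S.f i w - S.f j w = 0 := hweq
      have hwM : w ∈ MF S i j hij := mem_MF S |>.mpr ⟨hsub hw, by linarith⟩
      have hwt : w < t := by
        rcases lt_or_eq_of_le hw.2 with h'' | h''
        · exact h''
        · subst h''; exact absurd (by linarith : S.f i w = S.f j w) htne
      have : w ∈ (MF S i j hij).filter (· < t) := Finset.mem_filter.mpr ⟨hwM, hwt⟩
      rw [hF] at this
      exact absurd this (Finset.notMem_empty w)


lemma parity_gt (i j : Fin m) (hij : i ≠ j) (h0 : S.f i 0 < S.f j 0)
    (t : ℝ) (ht : t ∈ Set.Icc (0:ℝ) 1) (hnm : t ∉ MF S i j hij) :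
    (S.f j t < S.f i t ↔ ¬ Even (((MF S i j hij).filter (· < t)).card)) := by
  have h1 := parity_iff S i j hij h0 t ht hnm
  have hne : S.f i t ≠ S.f j t := fun h' => hnm (mem_MF S |>.mpr ⟨ht, h'⟩)
  constructor
  · intro h' h''
    have := h1.mpr h''; linarith
  · intro h'
    rcases lt_trichotomy (S.f i t) (S.f j t) with h'' | h'' | h''
    · exact absurd (h1.mp h'') h'
    · exact absurd h'' hne
    · exact h''

lemma ne_of_f0 {i j : Fin m} (h : S.f i 0 < S.f j 0) : i ≠ j := by
  intro hh; subst hh; exact lt_irrefl _ h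

/-- `takeWhile` on a strictly sorted list cuts exactly at the first failure point. -/
lemma takeWhile_eq_filter_of_sorted (p : ℝ → Bool) (t0 : ℝ) :
    ∀ l : List ℝ, l.Pairwise (· < ·) → t0 ∈ l →
      (∀ s ∈ l, s < t0 → p s = true) → p t0 = false →
      l.takeWhile p = l.filter (fun s => decide (s < t0)) := by
  intro l
  induction l with
  | nil => intro _ h0; simp at h0
  | cons a tl ih =>
    intro hs h0 hb hstop
    rw [List.pairwise_cons] at hs
    obtain ⟨ha, htl⟩ := hs
    rcases List.mem_cons.mp h0 with heq | h0'
    · have h1 : p a = false := heq ▸ hstop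
      have h2 : (decide (a < t0)) = false := by simp [heq]
      rw [List.takeWhile_cons, List.filter_cons, h1, h2]
      simp only [Bool.false_eq_true, if_false]
      symm
      rw [List.filter_eq_nil_iff]
      intro s hsmem
      have h3 := ha s hsmem
      simp only [decide_eq_true_eq]
      rw [heq]
      linarith
    · have hat0 : a < t0 := ha t0 h0'
      have pa : p a = true := hb a List.mem_cons_self hat0
      have h2 : (decide (a < t0)) = true := by simpa using hat0
      rw [List.takeWhile_cons, List.filter_cons, pa, h2]
      simp only [if_true]
      rw [ih htl h0' (fun s hsm h' => hb s (List.mem_cons_of_mem a hsm) h') hstop]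

lemma countP_sort (U : Finset ℝ) (p : ℝ → Prop) [DecidablePred p] :
    (U.sort (· ≤ ·)).countP (fun a => decide (p a)) = (U.filter p).card := by
  rw [(Finset.sort_perm_toList (r := (· ≤ ·)) (s := U)).countP_eq]
  show List.countP _ U.val.toList = _
  rw [← Multiset.coe_countP, Multiset.coe_toList, Multiset.countP_eq_card_filter]
  rfl

lemma length_eq_counts (l : List XYZ) :
    l.length = l.count XYZ.x + l.count XYZ.y + l.count XYZ.z := by
  induction l with
  | nil => simp
  | cons a tl ih =>
    cases a <;> simp [List.count_cons, ih] <;> omega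

/-- The letter function of a triple. -/
def ltr (i j k : Fin m) : ℝ → XYZ := fun t =>
  if S.f i t = S.f j t then XYZ.x else if S.f i t = S.f k t then XYZ.y else XYZ.z

/-- The union of the three meet sets of a triple. -/
def U3 (i j k : Fin m) (hij : i ≠ j) (hik : i ≠ k) (hjk : j ≠ k) : Finset ℝ :=
  MF S i j hij ∪ MF S i k hik ∪ MF S j k hjk

lemma sig_eq (i j k : Fin m) (h1 : S.f i 0 < S.f j 0) (h2 : S.f j 0 < S.f k 0)
    (hij : i ≠ j) (hik : i ≠ k) (hjk : j ≠ k) :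
    signature3 S i j k h1 h2 =
      ((U3 S i j k hij hik hjk).sort (· ≤ ·)).map (ltr S i j k) := rfl

section TripleLemmas

variable {i j k : Fin m} (hij : i ≠ j) (hik : i ≠ k) (hjk : j ≠ k)

lemma U3_Icc {t : ℝ} (ht : t ∈ U3 S i j k hij hik hjk) : t ∈ Set.Icc (0:ℝ) 1 := by
  simp only [U3, Finset.mem_union] at ht
  rcases ht with (h | h) | h <;> exact (mem_MF S |>.mp h).1

lemma ltr_eq_x_iff {t : ℝ} (ht : t ∈ U3 S i j k hij hik hjk) :
    (ltr S i j k t = XYZ.x ↔ t ∈ MF S i j hij) := by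
  have hIcc := U3_Icc S hij hik hjk ht
  constructor
  · intro h
    by_cases h1 : S.f i t = S.f j t
    · exact mem_MF S |>.mpr ⟨hIcc, h1⟩
    · exfalso
      simp only [ltr, if_neg h1] at h
      by_cases h2 : S.f i t = S.f k t
      · rw [if_pos h2] at h; cases h
      · rw [if_neg h2] at h; cases h
  · intro h
    have h1 : S.f i t = S.f j t := (mem_MF S |>.mp h).2
    simp only [ltr, if_pos h1]

lemma ltr_eq_y_iff {t : ℝ} (ht : t ∈ U3 S i j k hij hik hjk) :
    (ltr S i j k t = XYZ.y ↔ t ∈ MF S i k hik) := by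
  have hIcc := U3_Icc S hij hik hjk ht
  constructor
  · intro h
    by_cases h1 : S.f i t = S.f j t
    · simp only [ltr, if_pos h1] at h; cases h
    · by_cases h2 : S.f i t = S.f k t
      · exact mem_MF S |>.mpr ⟨hIcc, h2⟩
      · simp only [ltr, if_neg h1, if_neg h2] at h; cases h
  · intro h
    have h2 : S.f i t = S.f k t := (mem_MF S |>.mp h).2
    have h1 : ¬ (S.f i t = S.f j t) := by
      intro h1
      exact S.no_triple i j k hij hik hjk t hIcc ⟨h1, h2⟩
    simp only [ltr, if_neg h1, if_pos h2]

lemma ltr_eq_z_iff {t : ℝ} (ht : t ∈ U3 S i j k hij hik hjk) :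
    (ltr S i j k t = XYZ.z ↔ t ∈ MF S j k hjk) := by
  have hIcc := U3_Icc S hij hik hjk ht
  constructor
  · intro h
    by_cases h1 : S.f i t = S.f j t
    · simp only [ltr, if_pos h1] at h; cases h
    · by_cases h2 : S.f i t = S.f k t
      · simp only [ltr, if_neg h1, if_pos h2] at h; cases h
      · simp only [U3, Finset.mem_union] at ht
        rcases ht with (h' | h') | h'
        · exact absurd (mem_MF S |>.mp h').2 h1
        · exact absurd (mem_MF S |>.mp h').2 h2
        · exact h'
  · intro h
    have h3 : S.f j t = S.f k t := (mem_MF S |>.mp h).2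
    have h1 : ¬ (S.f i t = S.f j t) := by
      intro h1
      exact S.no_triple i j k hij hik hjk t hIcc ⟨h1, h1.trans h3⟩
    have h2 : ¬ (S.f i t = S.f k t) := by
      intro h2
      exact S.no_triple i j k hij hik hjk t hIcc ⟨h2.trans h3.symm, h2⟩
    simp only [ltr, if_neg h1, if_neg h2]

lemma beq_eq_decide (v : XYZ) : ((· == v) : XYZ → Bool) = fun a => decide (a = v) := by
  funext a
  cases a <;> cases v <;> rfl

lemma count_sig_gen (v : XYZ) (W : Finset ℝ)
    (hWU : W ⊆ U3 S i j k hij hik hjk)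
    (hclass : ∀ t ∈ U3 S i j k hij hik hjk, (ltr S i j k t = v ↔ t ∈ W)) :
    (((U3 S i j k hij hik hjk).sort (· ≤ ·)).map (ltr S i j k)).count v = W.card := by
  rw [List.count_eq_countP]
  rw [List.countP_map]
  have hfun : ((· == v) ∘ ltr S i j k) = fun a => decide (ltr S i j k a = v) := by
    funext a
    exact congrFun (beq_eq_decide v) (ltr S i j k a)
  rw [hfun, countP_sort]
  congr 1
  ext t
  simp only [Finset.mem_filter]
  constructor
  · rintro ⟨htU, hv⟩
    exact (hclass t htU).mp hv
  · intro hW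
    exact ⟨hWU hW, (hclass t (hWU hW)).mpr hW⟩

lemma takeWhile_count_sig_gen (v w : XYZ) (V W : Finset ℝ)
    (hVU : V ⊆ U3 S i j k hij hik hjk) (hWU : W ⊆ U3 S i j k hij hik hjk)
    (hV : ∀ t ∈ U3 S i j k hij hik hjk, (ltr S i j k t = v ↔ t ∈ V))
    (hW : ∀ t ∈ U3 S i j k hij hik hjk, (ltr S i j k t = w ↔ t ∈ W))
    (hVne : V.Nonempty) :
    ((((U3 S i j k hij hik hjk).sort (· ≤ ·)).map (ltr S i j k)).takeWhile (· != v)).count w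
      = (W.filter (· < V.min' hVne)).card := by
  set U := U3 S i j k hij hik hjk with hU
  set t0 := V.min' hVne with ht0
  have ht0V : t0 ∈ V := V.min'_mem hVne
  have ht0U : t0 ∈ U := hVU ht0V
  have ht0l : t0 ∈ U.sort (· ≤ ·) := (Finset.mem_sort _).mpr ht0U
  have hsorted : (U.sort (· ≤ ·)).Pairwise (· < ·) := (Finset.sortedLT_sort U).pairwise
  rw [List.takeWhile_map]
  have hTW : (U.sort (· ≤ ·)).takeWhile ((· != v) ∘ ltr S i j k)
      = (U.sort (· ≤ ·)).filter (fun s => decide (s < t0)) := by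
    apply takeWhile_eq_filter_of_sorted _ t0 _ hsorted ht0l
    · intro s hs hst0
      have hsU : s ∈ U := (Finset.mem_sort _).mp hs
      have hlv : ltr S i j k s ≠ v := by
        intro h'
        have : s ∈ V := (hV s hsU).mp h'
        have := V.min'_le s this
        rw [← ht0] at this
        linarith
      simp [Function.comp, hlv]
    · have : ltr S i j k t0 = v := (hV t0 ht0U).mpr ht0V
      simp [Function.comp, this]
  rw [hTW]
  rw [List.count_eq_countP, List.countP_map, List.countP_filter]
  have hfun : (fun a => ((· == w) ∘ ltr S i j k) a && decide (a < t0))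
      = fun a => decide (ltr S i j k a = w ∧ a < t0) := by
    funext a
    by_cases hw : ltr S i j k a = w <;> by_cases hlt : a < t0 <;>
      simp [Function.comp, hw, hlt]
  rw [hfun, countP_sort]
  congr 1
  ext t
  simp only [Finset.mem_filter]
  constructor
  · rintro ⟨htU, hv, hlt⟩
    exact ⟨(hW t htU).mp hv, hlt⟩
  · rintro ⟨htW, hlt⟩
    exact ⟨hWU htW, (hW t (hWU htW)).mpr htW, hlt⟩

end TripleLemmas

section Bridges

variable (i j k : Fin m) (h1 : S.f i 0 < S.f j 0) (h2 : S.f j 0 < S.f k 0)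

lemma card_x (σ : List XYZ) (hσ : signature3 S i j k h1 h2 = σ) :
    σ.count XYZ.x = (MF S i j (ne_of_f0 S h1)).card := by
  have hij := ne_of_f0 S h1
  have hik := ne_of_f0 S (h1.trans h2)
  have hjk := ne_of_f0 S h2
  rw [← hσ, sig_eq S i j k h1 h2 hij hik hjk]
  exact count_sig_gen S hij hik hjk XYZ.x (MF S i j hij)
    (Finset.subset_union_left.trans Finset.subset_union_left)
    (fun t ht => ltr_eq_x_iff S hij hik hjk ht)

lemma card_y (σ : List XYZ) (hσ : signature3 S i j k h1 h2 = σ) :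
    σ.count XYZ.y = (MF S i k (ne_of_f0 S (h1.trans h2))).card := by
  have hij := ne_of_f0 S h1
  have hik := ne_of_f0 S (h1.trans h2)
  have hjk := ne_of_f0 S h2
  rw [← hσ, sig_eq S i j k h1 h2 hij hik hjk]
  exact count_sig_gen S hij hik hjk XYZ.y (MF S i k hik)
    (Finset.subset_union_right.trans Finset.subset_union_left)
    (fun t ht => ltr_eq_y_iff S hij hik hjk ht)

lemma card_z (σ : List XYZ) (hσ : signature3 S i j k h1 h2 = σ) :
    σ.count XYZ.z = (MF S j k (ne_of_f0 S h2)).card := by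
  have hij := ne_of_f0 S h1
  have hik := ne_of_f0 S (h1.trans h2)
  have hjk := ne_of_f0 S h2
  rw [← hσ, sig_eq S i j k h1 h2 hij hik hjk]
  exact count_sig_gen S hij hik hjk XYZ.z (MF S j k hjk)
    Finset.subset_union_right
    (fun t ht => ltr_eq_z_iff S hij hik hjk ht)

lemma bridge_x (σ : List XYZ) (hσ : signature3 S i j k h1 h2 = σ)
    (hne : (MF S i j (ne_of_f0 S h1)).Nonempty) :
    (σ.takeWhile (· != XYZ.x)).count XYZ.y
      = ((MF S i k (ne_of_f0 S (h1.trans h2))).filter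
          (· < (MF S i j (ne_of_f0 S h1)).min' hne)).card := by
  have hij := ne_of_f0 S h1
  have hik := ne_of_f0 S (h1.trans h2)
  have hjk := ne_of_f0 S h2
  rw [← hσ, sig_eq S i j k h1 h2 hij hik hjk]
  exact takeWhile_count_sig_gen S hij hik hjk XYZ.x XYZ.y
    (MF S i j hij) (MF S i k hik)
    (Finset.subset_union_left.trans Finset.subset_union_left)
    (Finset.subset_union_right.trans Finset.subset_union_left)
    (fun t ht => ltr_eq_x_iff S hij hik hjk ht)
    (fun t ht => ltr_eq_y_iff S hij hik hjk ht) hne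

lemma bridge_y (σ : List XYZ) (hσ : signature3 S i j k h1 h2 = σ)
    (hne : (MF S i k (ne_of_f0 S (h1.trans h2))).Nonempty) :
    (σ.takeWhile (· != XYZ.y)).count XYZ.x
      = ((MF S i j (ne_of_f0 S h1)).filter
          (· < (MF S i k (ne_of_f0 S (h1.trans h2))).min' hne)).card := by
  have hij := ne_of_f0 S h1
  have hik := ne_of_f0 S (h1.trans h2)
  have hjk := ne_of_f0 S h2
  rw [← hσ, sig_eq S i j k h1 h2 hij hik hjk]
  exact takeWhile_count_sig_gen S hij hik hjk XYZ.y XYZ.x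
    (MF S i k hik) (MF S i j hij)
    (Finset.subset_union_right.trans Finset.subset_union_left)
    (Finset.subset_union_left.trans Finset.subset_union_left)
    (fun t ht => ltr_eq_y_iff S hij hik hjk ht)
    (fun t ht => ltr_eq_x_iff S hij hik hjk ht) hne

lemma bridge_z (σ : List XYZ) (hσ : signature3 S i j k h1 h2 = σ)
    (hne : (MF S j k (ne_of_f0 S h2)).Nonempty) :
    (σ.takeWhile (· != XYZ.z)).count XYZ.x
      = ((MF S i j (ne_of_f0 S h1)).filter
          (· < (MF S j k (ne_of_f0 S h2)).min' hne)).card := by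
  have hij := ne_of_f0 S h1
  have hik := ne_of_f0 S (h1.trans h2)
  have hjk := ne_of_f0 S h2
  rw [← hσ, sig_eq S i j k h1 h2 hij hik hjk]
  exact takeWhile_count_sig_gen S hij hik hjk XYZ.z XYZ.x
    (MF S j k hjk) (MF S i j hij)
    Finset.subset_union_right
    (Finset.subset_union_left.trans Finset.subset_union_left)
    (fun t ht => ltr_eq_z_iff S hij hik hjk ht)
    (fun t ht => ltr_eq_x_iff S hij hik hjk ht) hne

end Bridges

lemma exists_bot : ∃ b : Fin m, ∀ r, r ≠ b → S.f b 0 < S.f r 0 := by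
  have h3 := S.size_ge
  have hne : (Finset.univ : Finset (Fin m)).Nonempty := ⟨⟨0, by omega⟩, Finset.mem_univ _⟩
  obtain ⟨b, _, hb⟩ := Finset.exists_min_image Finset.univ (fun r => S.f r 0) hne
  exact ⟨b, fun r hr =>
    lt_of_le_of_ne (hb r (Finset.mem_univ r)) (S.endpoints0 b r (Ne.symm hr))⟩

lemma exists_top : ∃ p : Fin m, ∀ r, r ≠ p → S.f r 0 < S.f p 0 := by
  have h3 := S.size_ge
  have hne : (Finset.univ : Finset (Fin m)).Nonempty := ⟨⟨0, by omega⟩, Finset.mem_univ _⟩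
  obtain ⟨p, _, hp⟩ := Finset.exists_max_image Finset.univ (fun r => S.f r 0) hne
  exact ⟨p, fun r hr =>
    lt_of_le_of_ne (hp r (Finset.mem_univ r)) (S.endpoints0 r p hr)⟩

lemma exists_pred (b : Fin m) (hb : ∀ r, r ≠ b → S.f b 0 < S.f r 0)
    (i : Fin m) (hib : i ≠ b) :
    ∃ q : Fin m, q ≠ i ∧ S.f q 0 < S.f i 0 ∧
      ∀ r, r ≠ q → r ≠ i → (S.f r 0 < S.f q 0 ∨ S.f i 0 < S.f r 0) := by
  set T := Finset.univ.filter (fun r => S.f r 0 < S.f i 0) with hT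
  have hTne : T.Nonempty := ⟨b, by simp [hT, hb i hib]⟩
  obtain ⟨q, hqT, hq⟩ := Finset.exists_max_image T (fun r => S.f r 0) hTne
  have hq0 : S.f q 0 < S.f i 0 := by
    have := hqT; simp only [hT, Finset.mem_filter] at this; exact this.2
  have hqi : q ≠ i := by intro h; subst h; exact lt_irrefl _ hq0
  refine ⟨q, hqi, hq0, fun r hrq hri => ?_⟩
  rcases lt_trichotomy (S.f r 0) (S.f i 0) with h' | h' | h'
  · left
    have hrT : r ∈ T := by simp [hT, h']
    exact lt_of_le_of_ne (hq r hrT) (S.endpoints0 r q hrq)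
  · exact absurd h' (S.endpoints0 r i hri)
  · right; exact h'

lemma exists_succ (p : Fin m) (hp : ∀ r, r ≠ p → S.f r 0 < S.f p 0)
    (i : Fin m) (hip : i ≠ p) :
    ∃ q : Fin m, q ≠ i ∧ S.f i 0 < S.f q 0 ∧
      ∀ r, r ≠ q → r ≠ i → (S.f r 0 < S.f i 0 ∨ S.f q 0 < S.f r 0) := by
  set T := Finset.univ.filter (fun r => S.f i 0 < S.f r 0) with hT
  have hTne : T.Nonempty := ⟨p, by simp [hT, hp i hip]⟩
  obtain ⟨q, hqT, hq⟩ := Finset.exists_min_image T (fun r => S.f r 0) hTne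
  have hq0 : S.f i 0 < S.f q 0 := by
    have := hqT; simp only [hT, Finset.mem_filter] at this; exact this.2
  have hqi : q ≠ i := by intro h; subst h; exact lt_irrefl _ hq0
  refine ⟨q, hqi, hq0, fun r hrq hri => ?_⟩
  rcases lt_trichotomy (S.f r 0) (S.f i 0) with h' | h' | h'
  · left; exact h'
  · exact absurd h' (S.endpoints0 r i hri)
  · right
    have hrT : r ∈ T := by simp [hT, h']
    exact lt_of_le_of_ne (hq r hrT) (S.endpoints0 q r (Ne.symm hrq))


lemma not_mem_MF_of_mem_MF {a c d : Fin m} (hac : a ≠ c) (had : a ≠ d) (hcd : c ≠ d)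
    {t : ℝ} (h1 : t ∈ MF S a c hac) : t ∉ MF S a d had := by
  intro h2
  exact S.no_triple a c d hac had hcd t (mem_MF S |>.mp h1).1
    ⟨(mem_MF S |>.mp h1).2, (mem_MF S |>.mp h2).2⟩

lemma not_mem_MF_of_mem_MF' {a c d : Fin m} (hac : a ≠ c) (hda : d ≠ a) (hcd : c ≠ d)
    {t : ℝ} (h1 : t ∈ MF S a c hac) : t ∉ MF S d a hda := by
  intro h2
  exact S.no_triple a c d hac (Ne.symm hda) hcd t (mem_MF S |>.mp h1).1
    ⟨(mem_MF S |>.mp h1).2, (mem_MF S |>.mp h2).2.symm⟩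

lemma MF_nonempty (σ : List XYZ) (hσne : σ ≠ [])
    (hsig : ∀ (i j k : Fin m) (h1 : S.f i 0 < S.f j 0) (h2 : S.f j 0 < S.f k 0),
      signature3 S i j k h1 h2 = σ) (hm4 : 4 ≤ m) :
    ∀ (p q : Fin m) (h : p ≠ q), (MF S p q h).Nonempty := by
  have hcard : (Finset.univ : Finset (Fin m)).card = m := by simp
  have hmin : ∀ T : Finset (Fin m), T.Nonempty →
      ∃ c ∈ T, ∀ r ∈ T, r ≠ c → S.f c 0 < S.f r 0 := by
    intro T hT
    obtain ⟨c, hcT, hc⟩ := Finset.exists_min_image T (fun r => S.f r 0) hT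
    exact ⟨c, hcT, fun r hr hrc => lt_of_le_of_ne (hc r hr) (S.endpoints0 c r (Ne.symm hrc))⟩
  obtain ⟨b, hb⟩ := exists_bot S
  obtain ⟨p0, hp0⟩ := exists_top S
  set T : Finset (Fin m) := (Finset.univ.erase p0).erase b with hT
  have hTcard : 2 ≤ T.card := by
    have h1 : (Finset.univ.erase p0).card - 1 ≤ T.card := Finset.pred_card_le_card_erase
    have h2 : (Finset.univ : Finset (Fin m)).card - 1 ≤ (Finset.univ.erase p0).card :=
      Finset.pred_card_le_card_erase
    omega
  have hTne : T.Nonempty := by rw [← Finset.card_pos]; omega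
  obtain ⟨r, hrT, hr⟩ := hmin T hTne
  have hT2ne : (T.erase r).Nonempty := by
    rw [← Finset.card_pos]
    have : T.card - 1 ≤ (T.erase r).card := Finset.pred_card_le_card_erase
    omega
  obtain ⟨s, hsT'⟩ := hT2ne
  have hsT : s ∈ T := Finset.mem_of_mem_erase hsT'
  have hsr : s ≠ r := (Finset.mem_erase.mp hsT').1
  have hrb : r ≠ b := (Finset.mem_erase.mp hrT).1
  have hrp : r ≠ p0 := (Finset.mem_erase.mp (Finset.mem_of_mem_erase hrT)).1
  have hsb : s ≠ b := (Finset.mem_erase.mp hsT).1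
  have hsp : s ≠ p0 := (Finset.mem_erase.mp (Finset.mem_of_mem_erase hsT)).1
  have h_br : S.f b 0 < S.f r 0 := hb r hrb
  have h_rs : S.f r 0 < S.f s 0 := hr s hsT hsr
  have h_sp : S.f s 0 < S.f p0 0 := hp0 s hsp
  have hxy : σ.count XYZ.x = σ.count XYZ.y := by
    have e1 := card_y S b r s h_br h_rs σ (hsig b r s h_br h_rs)
    have e2 := card_x S b s p0 (h_br.trans h_rs) h_sp σ (hsig b s p0 (h_br.trans h_rs) h_sp)
    rw [e2, e1]
  have hxz : σ.count XYZ.x = σ.count XYZ.z := by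
    have e1 := card_z S b r s h_br h_rs σ (hsig b r s h_br h_rs)
    have e2 := card_x S r s p0 h_rs h_sp σ (hsig r s p0 h_rs h_sp)
    rw [e2, e1]
  have hlen := length_eq_counts σ
  have hlenpos : 0 < σ.length := by
    rcases Nat.eq_zero_or_pos σ.length with h' | h'
    · exact absurd (List.length_eq_zero_iff.mp h') hσne
    · exact h'
  have hxpos : 0 < σ.count XYZ.x := by omega
  have main : ∀ (p q : Fin m) (hor : S.f p 0 < S.f q 0), (MF S p q (ne_of_f0 S hor)).Nonempty := by
    intro p q hor
    have hex : ∃ e : Fin m, e ≠ p ∧ e ≠ q := by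
      have hTne' : ((Finset.univ.erase p).erase q).Nonempty := by
        rw [← Finset.card_pos]
        have h1 : (Finset.univ.erase p).card - 1 ≤ ((Finset.univ.erase p).erase q).card :=
          Finset.pred_card_le_card_erase
        have h2 : (Finset.univ : Finset (Fin m)).card - 1 ≤ (Finset.univ.erase p).card :=
          Finset.pred_card_le_card_erase
        omega
      obtain ⟨e, he⟩ := hTne'
      exact ⟨e, (Finset.mem_erase.mp (Finset.mem_of_mem_erase he)).1, (Finset.mem_erase.mp he).1⟩
    obtain ⟨e, hep, heq⟩ := hex
    rw [← Finset.card_pos]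
    rcases lt_trichotomy (S.f e 0) (S.f p 0) with h' | h' | h'
    · have hc := card_z S e p q h' hor σ (hsig e p q h' hor)
      have : 0 < (MF S p q (ne_of_f0 S hor)).card := by rw [← hc]; omega
      exact this
    · exact absurd h' (S.endpoints0 e p hep)
    · rcases lt_trichotomy (S.f e 0) (S.f q 0) with h'' | h'' | h''
      · have hc := card_y S p e q h' h'' σ (hsig p e q h' h'')
        have : 0 < (MF S p q (ne_of_f0 S (h'.trans h''))).card := by rw [← hc]; omega
        exact this
      · exact absurd h'' (S.endpoints0 e q heq)
      · have hc := card_x S p q e hor h'' σ (hsig p q e hor h'')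
        have : 0 < (MF S p q (ne_of_f0 S hor)).card := by rw [← hc]; omega
        exact this
  intro p q h
  rcases lt_trichotomy (S.f p 0) (S.f q 0) with h' | h' | h'
  · exact main p q h'
  · exact absurd h' (S.endpoints0 p q h)
  · have hres := main q p h'
    rw [MF_comm S h]
    exact hres

lemma witness_lower (j q : Fin m) (hqj : q ≠ j) (h0 : S.f q 0 < S.f j 0)
    (hne : (MF S q j hqj).Nonempty)
    (h : ∀ e : Fin m, e ≠ q → e ≠ j →
      S.f q ((MF S q j hqj).min' hne) < S.f e ((MF S q j hqj).min' hne)) :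
    OnLowerEnv S j := by
  set t₀ := (MF S q j hqj).min' hne with ht₀def
  have ht₀M : t₀ ∈ MF S q j hqj := Finset.min'_mem _ hne
  have ht₀Icc : t₀ ∈ Set.Icc (0:ℝ) 1 := (mem_MF S |>.mp ht₀M).1
  have ht₀Ioo : t₀ ∈ Set.Ioo (0:ℝ) 1 := MF_subset_Ioo S ht₀M
  have heq0 : S.f q t₀ = S.f j t₀ := (mem_MF S |>.mp ht₀M).2
  set G : Finset ℝ := (crossTimes_finite S j).toFinset with hG
  have hmemG : ∀ u : ℝ, u ∈ G ↔
      (u ∈ Set.Icc (0:ℝ) 1 ∧ ∃ r : Fin m, r ≠ j ∧ S.f r u = S.f j u) := by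
    intro u; simp [hG, Set.Finite.mem_toFinset, crossTimes]
  set F' : Finset ℝ := insert (1:ℝ) (G.filter (fun u => t₀ < u)) with hF'
  have hF'ne : F'.Nonempty := ⟨1, by simp [hF']⟩
  set t₁ := F'.min' hF'ne with ht₁def
  have ht₁gt : t₀ < t₁ := by
    rw [ht₁def, Finset.lt_min'_iff]
    intro c hc
    simp only [hF', Finset.mem_insert, Finset.mem_filter] at hc
    rcases hc with rfl | ⟨_, hc2⟩
    · exact ht₀Ioo.2
    · exact hc2
  have ht₁le1 : t₁ ≤ 1 := Finset.min'_le _ 1 (by simp [hF'])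
  set t := (t₀ + t₁)/2 with htdef
  have htt0 : t₀ < t := by rw [htdef]; linarith
  have htt1 : t < t₁ := by rw [htdef]; linarith
  have htIcc : t ∈ Set.Icc (0:ℝ) 1 := ⟨by linarith [ht₀Ioo.1], by linarith⟩
  have hnomeet : ∀ u : ℝ, t₀ < u → u ≤ t → u ∉ G := by
    intro u hu1 hu2 huG
    have hmem : u ∈ F' := by
      simp only [hF', Finset.mem_insert, Finset.mem_filter]
      exact Or.inr ⟨huG, hu1⟩
    have := Finset.min'_le _ u hmem
    rw [← ht₁def] at this
    linarith
  refine ⟨t, htIcc, ?_⟩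
  intro r hrj
  by_cases hrq : r = q
  · rw [hrq]
    have htnm : t ∉ MF S q j hqj := by
      intro hmem
      exact hnomeet t htt0 le_rfl
        ((hmemG t).mpr ⟨htIcc, q, hqj, (mem_MF S |>.mp hmem).2⟩)
    have hcard : ((MF S q j hqj).filter (· < t)).card = 1 := by
      have hsingle : (MF S q j hqj).filter (· < t) = {t₀} := by
        ext u
        simp only [Finset.mem_filter, Finset.mem_singleton]
        constructor
        · rintro ⟨huM, hut⟩
          by_contra hne'
          have hu0 : t₀ ≤ u := Finset.min'_le _ u huM
          have h'' : t₀ < u := lt_of_le_of_ne hu0 (Ne.symm hne')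
          exact hnomeet u h'' (le_of_lt hut)
            ((hmemG u).mpr ⟨(mem_MF S |>.mp huM).1, q, hqj, (mem_MF S |>.mp huM).2⟩)
        · rintro rfl; exact ⟨ht₀M, htt0⟩
      rw [hsingle]; rfl
    have hpar := parity_gt S q j hqj h0 t htIcc htnm
    apply hpar.mpr
    rw [hcard]
    simp
  · have hrt₀ : S.f j t₀ < S.f r t₀ := by
      have := h r hrq hrj; linarith
    by_contra hcon
    push_neg at hcon
    have hrneq : S.f r t ≠ S.f j t := by
      intro h'
      exact hnomeet t htt0 le_rfl ((hmemG t).mpr ⟨htIcc, r, hrj, h'⟩)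
    have hlt : S.f r t < S.f j t := lt_of_le_of_ne hcon hrneq
    have hsub : Set.Icc t₀ t ⊆ Set.Icc (0:ℝ) 1 := Set.Icc_subset_Icc ht₀Icc.1 htIcc.2
    have hcont' : ContinuousOn (fun s => S.f r s - S.f j s) (Set.Icc t₀ t) :=
      ((S.cont r).sub (S.cont j)).mono hsub
    have h0mem : (0:ℝ) ∈ Set.Icc (S.f r t - S.f j t) (S.f r t₀ - S.f j t₀) :=
      ⟨by linarith, by linarith⟩
    obtain ⟨w, hw, hweq⟩ := intermediate_value_Icc' (le_of_lt htt0) hcont' h0mem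
    have hweq' : S.f r w - S.f j w = 0 := hweq
    have hwIcc := hsub hw
    have hwG : w ∈ G := (hmemG w).mpr ⟨hwIcc, r, hrj, by linarith⟩
    have hwt₀ : t₀ < w := by
      rcases lt_or_eq_of_le hw.1 with h' | h'
      · exact h'
      · exfalso
        rw [← h'] at hweq'
        linarith
    exact hnomeet w hwt₀ hw.2 hwG

lemma witness_upper (j q : Fin m) (hjq : j ≠ q) (h0 : S.f j 0 < S.f q 0)
    (hne : (MF S j q hjq).Nonempty)
    (h : ∀ e : Fin m, e ≠ q → e ≠ j →
      S.f e ((MF S j q hjq).min' hne) < S.f j ((MF S j q hjq).min' hne)) :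
    OnUpperEnv S j := by
  set t₀ := (MF S j q hjq).min' hne with ht₀def
  have ht₀M : t₀ ∈ MF S j q hjq := Finset.min'_mem _ hne
  have ht₀Icc : t₀ ∈ Set.Icc (0:ℝ) 1 := (mem_MF S |>.mp ht₀M).1
  have ht₀Ioo : t₀ ∈ Set.Ioo (0:ℝ) 1 := MF_subset_Ioo S ht₀M
  have heq0 : S.f j t₀ = S.f q t₀ := (mem_MF S |>.mp ht₀M).2
  set G : Finset ℝ := (crossTimes_finite S j).toFinset with hG
  have hmemG : ∀ u : ℝ, u ∈ G ↔
      (u ∈ Set.Icc (0:ℝ) 1 ∧ ∃ r : Fin m, r ≠ j ∧ S.f r u = S.f j u) := by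
    intro u; simp [hG, Set.Finite.mem_toFinset, crossTimes]
  set F' : Finset ℝ := insert (1:ℝ) (G.filter (fun u => t₀ < u)) with hF'
  have hF'ne : F'.Nonempty := ⟨1, by simp [hF']⟩
  set t₁ := F'.min' hF'ne with ht₁def
  have ht₁gt : t₀ < t₁ := by
    rw [ht₁def, Finset.lt_min'_iff]
    intro c hc
    simp only [hF', Finset.mem_insert, Finset.mem_filter] at hc
    rcases hc with rfl | ⟨_, hc2⟩
    · exact ht₀Ioo.2
    · exact hc2
  have ht₁le1 : t₁ ≤ 1 := Finset.min'_le _ 1 (by simp [hF'])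
  set t := (t₀ + t₁)/2 with htdef
  have htt0 : t₀ < t := by rw [htdef]; linarith
  have htt1 : t < t₁ := by rw [htdef]; linarith
  have htIcc : t ∈ Set.Icc (0:ℝ) 1 := ⟨by linarith [ht₀Ioo.1], by linarith⟩
  have hnomeet : ∀ u : ℝ, t₀ < u → u ≤ t → u ∉ G := by
    intro u hu1 hu2 huG
    have hmem : u ∈ F' := by
      simp only [hF', Finset.mem_insert, Finset.mem_filter]
      exact Or.inr ⟨huG, hu1⟩
    have := Finset.min'_le _ u hmem
    rw [← ht₁def] at this
    linarith
  refine ⟨t, htIcc, ?_⟩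
  intro r hrj
  by_cases hrq : r = q
  · rw [hrq]
    have htnm : t ∉ MF S j q hjq := by
      intro hmem
      exact hnomeet t htt0 le_rfl
        ((hmemG t).mpr ⟨htIcc, q, Ne.symm hjq, (mem_MF S |>.mp hmem).2.symm⟩)
    have hcard : ((MF S j q hjq).filter (· < t)).card = 1 := by
      have hsingle : (MF S j q hjq).filter (· < t) = {t₀} := by
        ext u
        simp only [Finset.mem_filter, Finset.mem_singleton]
        constructor
        · rintro ⟨huM, hut⟩
          by_contra hne'
          have hu0 : t₀ ≤ u := Finset.min'_le _ u huM
          have h'' : t₀ < u := lt_of_le_of_ne hu0 (Ne.symm hne')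
          exact hnomeet u h'' (le_of_lt hut)
            ((hmemG u).mpr ⟨(mem_MF S |>.mp huM).1, q, Ne.symm hjq, (mem_MF S |>.mp huM).2.symm⟩)
        · rintro rfl; exact ⟨ht₀M, htt0⟩
      rw [hsingle]; rfl
    have hpar := parity_gt S j q hjq h0 t htIcc htnm
    apply hpar.mpr
    rw [hcard]
    simp
  · have hrt₀ : S.f r t₀ < S.f j t₀ := h r hrq hrj
    by_contra hcon
    push_neg at hcon
    have hrneq : S.f r t ≠ S.f j t := by
      intro h'
      exact hnomeet t htt0 le_rfl ((hmemG t).mpr ⟨htIcc, r, hrj, h'⟩)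
    have hlt : S.f j t < S.f r t := lt_of_le_of_ne hcon (Ne.symm hrneq)
    have hsub : Set.Icc t₀ t ⊆ Set.Icc (0:ℝ) 1 := Set.Icc_subset_Icc ht₀Icc.1 htIcc.2
    have hcont' : ContinuousOn (fun s => S.f r s - S.f j s) (Set.Icc t₀ t) :=
      ((S.cont r).sub (S.cont j)).mono hsub
    have h0mem : (0:ℝ) ∈ Set.Icc (S.f r t₀ - S.f j t₀) (S.f r t - S.f j t) :=
      ⟨by linarith, by linarith⟩
    obtain ⟨w, hw, hweq⟩ := intermediate_value_Icc (le_of_lt htt0) hcont' h0mem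
    have hweq' : S.f r w - S.f j w = 0 := hweq
    have hwIcc := hsub hw
    have hwG : w ∈ G := (hmemG w).mpr ⟨hwIcc, r, hrj, by linarith⟩
    have hwt₀ : t₀ < w := by
      rcases lt_or_eq_of_le hw.1 with h' | h'
      · exact h'
      · exfalso
        rw [← h'] at hweq'
        linarith
    exact hnomeet w hwt₀ hw.2 hwG

end RSAux

/-- **Theorem.** Every regular system of paths is upper convex or lower convex. -/
theorem regular_system_upper_or_lower_convex (m : ℕ) (S : PathSystem m)
    (hreg : IsRegularSystem S) :
    (∀ i : Fin m, OnUpperEnv S i) ∨ (∀ i : Fin m, OnLowerEnv S i) := by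
  classical
  obtain ⟨hm4, σ, hσne, hsig⟩ := hreg
  set α := (σ.takeWhile (· != XYZ.x)).count XYZ.y with hαdef
  set β := (σ.takeWhile (· != XYZ.y)).count XYZ.x with hβdef
  set γ := (σ.takeWhile (· != XYZ.z)).count XYZ.x with hγdef
  have hMFne := RSAux.MF_nonempty S σ hσne hsig hm4
  obtain ⟨b, hb⟩ := RSAux.exists_bot S
  obtain ⟨p, hp⟩ := RSAux.exists_top S
  by_cases hEa : Even α
  · by_cases hEb : Even β
    · -- Case I : lower convex, every path dips under via the bottom path
      right
      intro i
      by_cases hib : i = b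
      · subst hib
        exact ⟨0, Set.left_mem_Icc.mpr zero_le_one, fun r hr => hb r hr⟩
      · have h0 : S.f b 0 < S.f i 0 := hb i hib
        have hbi : b ≠ i := RSAux.ne_of_f0 S h0
        have hne := hMFne b i hbi
        apply RSAux.witness_lower S i b hbi h0 hne
        intro e heb hei
        set t₀ := (RSAux.MF S b i hbi).min' hne with ht₀def
        have ht₀M : t₀ ∈ RSAux.MF S b i hbi := Finset.min'_mem _ hne
        have ht₀Icc : t₀ ∈ Set.Icc (0:ℝ) 1 := (RSAux.mem_MF S |>.mp ht₀M).1
        have h0e : S.f b 0 < S.f e 0 := hb e heb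
        have hbe : b ≠ e := RSAux.ne_of_f0 S h0e
        have htnm : t₀ ∉ RSAux.MF S b e hbe :=
          RSAux.not_mem_MF_of_mem_MF S hbi hbe (fun h => hei h.symm) ht₀M
        rcases lt_trichotomy (S.f e 0) (S.f i 0) with hcase | hcase | hcase
        · have hbr := RSAux.bridge_y S b e i h0e hcase σ (hsig b e i h0e hcase) hne
          exact (RSAux.parity_iff S b e hbe h0e t₀ ht₀Icc htnm).mpr (hbr ▸ hEb)
        · exact absurd hcase (S.endpoints0 e i hei)
        · have hbr := RSAux.bridge_x S b i e h0 hcase σ (hsig b i e h0 hcase) hne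
          exact (RSAux.parity_iff S b e hbe h0e t₀ ht₀Icc htnm).mpr (hbr ▸ hEa)
    · by_cases hEg : Even γ
      · -- Case III : upper convex via the top path
        left
        intro i
        by_cases hip : i = p
        · subst hip
          exact ⟨0, Set.left_mem_Icc.mpr zero_le_one, fun r hr => hp r hr⟩
        · have h0 : S.f i 0 < S.f p 0 := hp i hip
          have hipne : i ≠ p := RSAux.ne_of_f0 S h0
          have hne := hMFne i p hipne
          apply RSAux.witness_upper S i p hipne h0 hne
          intro e hep hei
          set t₀ := (RSAux.MF S i p hipne).min' hne with ht₀def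
          have ht₀M : t₀ ∈ RSAux.MF S i p hipne := Finset.min'_mem _ hne
          have ht₀Icc : t₀ ∈ Set.Icc (0:ℝ) 1 := (RSAux.mem_MF S |>.mp ht₀M).1
          rcases lt_trichotomy (S.f e 0) (S.f i 0) with hcase | hcase | hcase
          · have hei' : e ≠ i := RSAux.ne_of_f0 S hcase
            have htnm : t₀ ∉ RSAux.MF S e i hei' :=
              RSAux.not_mem_MF_of_mem_MF' S hipne hei' (fun h => hep h.symm) ht₀M
            have hbr := RSAux.bridge_z S e i p hcase h0 σ (hsig e i p hcase h0) hne
            exact (RSAux.parity_iff S e i hei' hcase t₀ ht₀Icc htnm).mpr (hbr ▸ hEg)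
          · exact absurd hcase (S.endpoints0 e i hei)
          · have h2e : S.f e 0 < S.f p 0 := hp e hep
            have hie : i ≠ e := RSAux.ne_of_f0 S hcase
            have htnm : t₀ ∉ RSAux.MF S i e hie :=
              RSAux.not_mem_MF_of_mem_MF S hipne hie (fun h => hep h.symm) ht₀M
            have hbr := RSAux.bridge_y S i e p hcase h2e σ (hsig i e p hcase h2e) hne
            exact (RSAux.parity_gt S i e hie hcase t₀ ht₀Icc htnm).mpr (hbr ▸ hEb)
      · -- Case II : lower convex via predecessors
        right
        intro i
        by_cases hib : i = b
        · subst hib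
          exact ⟨0, Set.left_mem_Icc.mpr zero_le_one, fun r hr => hb r hr⟩
        · obtain ⟨q, hqi, hq0, hqmax⟩ := RSAux.exists_pred S b hb i hib
          have hne := hMFne q i hqi
          apply RSAux.witness_lower S i q hqi hq0 hne
          intro e heq hei
          set t₀ := (RSAux.MF S q i hqi).min' hne with ht₀def
          have ht₀M : t₀ ∈ RSAux.MF S q i hqi := Finset.min'_mem _ hne
          have ht₀Icc : t₀ ∈ Set.Icc (0:ℝ) 1 := (RSAux.mem_MF S |>.mp ht₀M).1
          rcases hqmax e heq hei with h' | h'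
          · have heq' : e ≠ q := RSAux.ne_of_f0 S h'
            have htnm : t₀ ∉ RSAux.MF S e q heq' :=
              RSAux.not_mem_MF_of_mem_MF' S hqi heq' (fun h => hei h.symm) ht₀M
            have hbr := RSAux.bridge_z S e q i h' hq0 σ (hsig e q i h' hq0) hne
            exact (RSAux.parity_gt S e q heq' h' t₀ ht₀Icc htnm).mpr (hbr ▸ hEg)
          · have hqe : q ≠ e := RSAux.ne_of_f0 S (hq0.trans h')
            have htnm : t₀ ∉ RSAux.MF S q e hqe :=
              RSAux.not_mem_MF_of_mem_MF S hqi hqe (fun h => hei h.symm) ht₀M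
            have hbr := RSAux.bridge_x S q i e hq0 h' σ (hsig q i e hq0 h') hne
            exact (RSAux.parity_iff S q e hqe (hq0.trans h') t₀ ht₀Icc htnm).mpr (hbr ▸ hEa)
  · by_cases hEg : Even γ
    · -- Case IV : upper convex via successors
      left
      intro i
      by_cases hip : i = p
      · subst hip
        exact ⟨0, Set.left_mem_Icc.mpr zero_le_one, fun r hr => hp r hr⟩
      · obtain ⟨q, hqi, hq0, hqmin⟩ := RSAux.exists_succ S p hp i hip
        have hiq : i ≠ q := RSAux.ne_of_f0 S hq0
        have hne := hMFne i q hiq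
        apply RSAux.witness_upper S i q hiq hq0 hne
        intro e heq hei
        set t₀ := (RSAux.MF S i q hiq).min' hne with ht₀def
        have ht₀M : t₀ ∈ RSAux.MF S i q hiq := Finset.min'_mem _ hne
        have ht₀Icc : t₀ ∈ Set.Icc (0:ℝ) 1 := (RSAux.mem_MF S |>.mp ht₀M).1
        rcases hqmin e heq hei with h' | h'
        · have hei' : e ≠ i := RSAux.ne_of_f0 S h'
          have htnm : t₀ ∉ RSAux.MF S e i hei' :=
            RSAux.not_mem_MF_of_mem_MF' S hiq hei' (fun h => heq h.symm) ht₀M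
          have hbr := RSAux.bridge_z S e i q h' hq0 σ (hsig e i q h' hq0) hne
          exact (RSAux.parity_iff S e i hei' h' t₀ ht₀Icc htnm).mpr (hbr ▸ hEg)
        · have hie : i ≠ e := RSAux.ne_of_f0 S (hq0.trans h')
          have htnm : t₀ ∉ RSAux.MF S i e hie :=
            RSAux.not_mem_MF_of_mem_MF S hiq hie (fun h => heq h.symm) ht₀M
          have hbr := RSAux.bridge_x S i q e hq0 h' σ (hsig i q e hq0 h') hne
          exact (RSAux.parity_gt S i e hie (hq0.trans h') t₀ ht₀Icc htnm).mpr (hbr ▸ hEa)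
    · -- Case V : impossible
      exfalso
      have hex : ∃ e : Fin m, e ≠ b ∧ e ≠ p := by
        have hcard : (Finset.univ : Finset (Fin m)).card = m := by simp
        have hTne' : ((Finset.univ.erase b).erase p).Nonempty := by
          rw [← Finset.card_pos]
          have h1 : (Finset.univ.erase b).card - 1 ≤ ((Finset.univ.erase b).erase p).card :=
            Finset.pred_card_le_card_erase
          have h2 : (Finset.univ : Finset (Fin m)).card - 1 ≤ (Finset.univ.erase b).card :=
            Finset.pred_card_le_card_erase
          omega
        obtain ⟨e, he⟩ := hTne'
        exact ⟨e, (Finset.mem_erase.mp (Finset.mem_of_mem_erase he)).1,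
          (Finset.mem_erase.mp he).1⟩
      obtain ⟨e, heb, hep⟩ := hex
      have h1 : S.f b 0 < S.f e 0 := hb e heb
      have h2 : S.f e 0 < S.f p 0 := hp e hep
      have hbe : b ≠ e := RSAux.ne_of_f0 S h1
      have hbp : b ≠ p := RSAux.ne_of_f0 S (h1.trans h2)
      have hepn : e ≠ p := RSAux.ne_of_f0 S h2
      have hneA := hMFne b e hbe
      have hneB := hMFne b p hbp
      have hneC := hMFne e p hepn
      have hbrx := RSAux.bridge_x S b e p h1 h2 σ (hsig b e p h1 h2) hneA
      have hbrz := RSAux.bridge_z S b e p h1 h2 σ (hsig b e p h1 h2) hneC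
      have hαpos : α ≠ 0 := fun h => hEa (h ▸ Even.zero)
      have hγpos : γ ≠ 0 := fun h => hEg (h ▸ Even.zero)
      have hBA : (RSAux.MF S b p hbp).min' hneB < (RSAux.MF S b e hbe).min' hneA := by
        have hcc : ((RSAux.MF S b p hbp).filter
            (· < (RSAux.MF S b e hbe).min' hneA)).Nonempty := by
          rw [← Finset.card_pos]
          have : α = ((RSAux.MF S b p hbp).filter
              (· < (RSAux.MF S b e hbe).min' hneA)).card := hbrx
          omega
        obtain ⟨u, hu⟩ := hcc
        have h3 := Finset.min'_le _ u (Finset.mem_filter.mp hu).1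
        have h4 : u < (RSAux.MF S b e hbe).min' hneA := by
          simpa using (Finset.mem_filter.mp hu).2
        linarith
      have hAC : (RSAux.MF S b e hbe).min' hneA < (RSAux.MF S e p hepn).min' hneC := by
        have hcc : ((RSAux.MF S b e hbe).filter
            (· < (RSAux.MF S e p hepn).min' hneC)).Nonempty := by
          rw [← Finset.card_pos]
          have : γ = ((RSAux.MF S b e hbe).filter
              (· < (RSAux.MF S e p hepn).min' hneC)).card := hbrz
          omega
        obtain ⟨u, hu⟩ := hcc
        have h3 := Finset.min'_le _ u (Finset.mem_filter.mp hu).1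
        have h4 : u < (RSAux.MF S e p hepn).min' hneC := by
          simpa using (Finset.mem_filter.mp hu).2
        linarith
      set t₂ := (RSAux.MF S b p hbp).min' hneB with ht₂def
      have ht₂M : t₂ ∈ RSAux.MF S b p hbp := Finset.min'_mem _ hneB
      have ht₂Icc : t₂ ∈ Set.Icc (0:ℝ) 1 := (RSAux.mem_MF S |>.mp ht₂M).1
      have heqbp : S.f b t₂ = S.f p t₂ := (RSAux.mem_MF S |>.mp ht₂M).2
      have hnmA : t₂ ∉ RSAux.MF S b e hbe := by
        intro hmem
        have := Finset.min'_le _ t₂ hmem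
        linarith
      have hnmC : t₂ ∉ RSAux.MF S e p hepn := by
        intro hmem
        have := Finset.min'_le _ t₂ hmem
        linarith
      have hfA : ((RSAux.MF S b e hbe).filter (· < t₂)) = ∅ := by
        rw [Finset.filter_eq_empty_iff]
        intro u hu
        have := Finset.min'_le _ u hu
        simp only [not_lt]
        linarith
      have hfC : ((RSAux.MF S e p hepn).filter (· < t₂)) = ∅ := by
        rw [Finset.filter_eq_empty_iff]
        intro u hu
        have := Finset.min'_le _ u hu
        simp only [not_lt]
        linarith
      have hlt1 : S.f b t₂ < S.f e t₂ :=
        (RSAux.parity_iff S b e hbe h1 t₂ ht₂Icc hnmA).mpr (by simp [hfA])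
      have hlt2 : S.f e t₂ < S.f p t₂ :=
        (RSAux.parity_iff S e p hepn h2 t₂ ht₂Icc hnmC).mpr (by simp [hfC])
      linarith

end
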